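/- Suppose (a,b) with b non-increasing admits a bipartite graph and b_1 ≥ 1. Then the interval [max{b_1 − M^{(1)}, 0}, min{m_1, D_left^{(1)} + D_now^{(1)} + D_right^{(1)}}] for F(1) is nonempty; i.e., max{b_1 − Σ_{k≥2} m_k, 0} ≤ min{m_1, D_left^{(1)} + D_now^{(1)} + D_right^{(1)}}. -/

import Mathlib

/-- There is a bipartite graph with degree sequences `a` and `b`. -/
def hasBG (m n : ℕ) (a : Fin m → ℕ) (b : Fin n → ℕ) : Prop :=
  ∃ M : Fin m → Fin n → Bool,
    (∀ i, (Finset.univ.filter (fun j => M i j = true)).card = a i) ∧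
    (∀ j, (Finset.univ.filter (fun i => M i j = true)).card = b j)

/-- Conjugate vector: `zconj m a h = |{i : a i ≥ h}|`. -/
def zconj (m : ℕ) (a : Fin m → ℕ) (h : ℕ) : ℕ :=
  (Finset.univ.filter (fun i => h ≤ a i)).card

/-- The tail `b' = (b 1, …, b n)` of `b`, padded with zeros. -/
def bpad (n : ℕ) (b : Fin (n + 1) → ℕ) (h : ℕ) : ℕ :=
  if h2 : h < n + 1 then b ⟨h, h2⟩ else 0

/-- Partial sums of the conjugate equal sums of truncated degrees. -/
lemma sum_zconj (m : ℕ) (a : Fin m → ℕ) (t : ℕ) :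
    ∑ h ∈ Finset.Icc 1 t, zconj m a h = ∑ i, min (a i) t := by
  unfold zconj
  simp_rw [Finset.card_filter]
  rw [Finset.sum_comm]
  refine Finset.sum_congr rfl fun i _ => ?_
  rw [← Finset.card_filter]
  have : Finset.filter (fun h => h ≤ a i) (Finset.Icc 1 t)
      = Finset.Icc 1 (min (a i) t) := by
    ext h; simp only [Finset.mem_filter, Finset.mem_Icc]; omega
  rw [this, Nat.card_Icc]
  omega

/-- Double counting edges into a set of right-vertices. -/
lemma double_count {m n : ℕ} (M : Fin m → Fin n → Bool) (b : Fin n → ℕ)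
    (hM : ∀ j, (Finset.univ.filter (fun i => M i j = true)).card = b j)
    (p : Fin n → Prop) [DecidablePred p] :
    ∑ j ∈ Finset.univ.filter p, b j
      = ∑ i, (Finset.univ.filter (fun j => p j ∧ M i j = true)).card := by
  have h1 : ∀ i : Fin m, (Finset.univ.filter (fun j => p j ∧ M i j = true)).card
      = ∑ j ∈ Finset.univ.filter p, (if M i j = true then 1 else 0) := by
    intro i
    rw [Finset.card_filter, Finset.sum_filter]
    refine Finset.sum_congr rfl fun j _ => ?_
    by_cases hp : p j <;> by_cases hq : M i j = true <;> simp [hp, hq]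
  simp_rw [h1]
  rw [Finset.sum_comm]
  exact Finset.sum_congr rfl fun j _ => by rw [← hM j, Finset.card_filter]

/-- Sums of the padded tail correspond to sums of `b` over column ranges. -/
lemma sum_bpad (n r : ℕ) (b : Fin (n + 1) → ℕ) :
    ∑ j ∈ Finset.univ.filter (fun j : Fin (n + 1) => 1 ≤ j.val ∧ j.val ≤ r), b j
      = ∑ h ∈ Finset.Icc 1 r, bpad n b h := by
  have key : ∀ j : Fin (n + 1), b j = bpad n b j.val := fun j => by
    simp [bpad, j.isLt]
  calc ∑ j ∈ Finset.univ.filter (fun j : Fin (n + 1) => 1 ≤ j.val ∧ j.val ≤ r), b j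
      = ∑ j : Fin (n + 1), if 1 ≤ j.val ∧ j.val ≤ r then bpad n b j.val else 0 := by
        rw [Finset.sum_filter]
        exact Finset.sum_congr rfl fun j _ => by rw [← key]
    _ = ∑ h ∈ Finset.range (n + 1), if 1 ≤ h ∧ h ≤ r then bpad n b h else 0 :=
        Fin.sum_univ_eq_sum_range (fun h => if 1 ≤ h ∧ h ≤ r then bpad n b h else 0) (n + 1)
    _ = ∑ h ∈ Finset.range (max (n + 1) (r + 1)),
          if 1 ≤ h ∧ h ≤ r then bpad n b h else 0 := by
        refine Finset.sum_subset (Finset.range_subset_range.2 (le_max_left _ _)) ?_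
        intro h _ hh
        simp only [Finset.mem_range, not_lt] at hh
        have hz : bpad n b h = 0 := by
          unfold bpad; rw [dif_neg (by omega)]
        simp [hz]
    _ = ∑ h ∈ Finset.Icc 1 r, bpad n b h := by
        rw [← Finset.sum_filter]
        congr 1
        ext h
        simp only [Finset.mem_filter, Finset.mem_range, Finset.mem_Icc]
        omega

lemma card_filter_val (n r : ℕ) :
    (Finset.univ.filter (fun j : Fin (n + 1) => 1 ≤ j.val ∧ j.val ≤ r)).card ≤ r := by
  have h := Finset.card_le_card_of_injOn
    (s := Finset.univ.filter (fun j : Fin (n + 1) => 1 ≤ j.val ∧ j.val ≤ r))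
    (f := fun j : Fin (n + 1) => j.val)
    (t := Finset.Icc 1 r)
    (fun j hj => by
      simp only [Finset.mem_coe, Finset.mem_filter, Finset.mem_univ, true_and] at hj
      exact Finset.mem_Icc.2 hj)
    (fun x _ y _ hxy => Fin.ext hxy)
  rwa [Nat.card_Icc, Nat.add_sub_cancel] at h

/-- Nonemptiness of the feasibility interval for `F(1)`: if `(a, b)` admits a bipartite
graph, `b` is non-increasing with positive entries, `a` has positive entries and minimal
degree `α`, then `max{b 0 − M⁽¹⁾, 0} ≤ min{m₁, D_left⁽¹⁾ + D_now⁽¹⁾ + D_right⁽¹⁾}`. -/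
theorem stmt19 (m n : ℕ) (a : Fin m → ℕ) (b : Fin (n + 1) → ℕ)
    (hb : Antitone b) (ha : ∀ i, 1 ≤ a i) (hbpos : ∀ j, 1 ≤ b j)
    (hfeas : hasBG m (n + 1) a b)
    (α : ℕ) (hα₁ : ∃ i, a i = α) (hα₂ : ∀ i, α ≤ a i) :
    max ((b 0 : ℤ) - ((Finset.univ.filter (fun i : Fin m => α < a i)).card : ℤ)) 0
      ≤ min ((Finset.univ.filter (fun i : Fin m => a i = α)).card : ℤ)
        ((∑ h ∈ Finset.Icc 1 (α - 1), ((zconj m a h : ℤ) - (bpad n b h : ℤ)))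
          + ((zconj m a α : ℤ) - (bpad n b α : ℤ))
          + min (sInf {s : ℤ | ∃ r ∈ Finset.Icc (α + 1) (n + 1),
              s = ∑ h ∈ Finset.Icc (α + 1) r,
                    ((zconj m a h : ℤ) - (bpad n b h : ℤ))}) 0) := by
  obtain ⟨M, hMa, hMb⟩ := hfeas
  obtain ⟨i₀, hi₀⟩ := hα₁
  have hα1 : 1 ≤ α := hi₀ ▸ ha i₀
  have hb0m : b 0 ≤ m := by
    rw [← hMb 0]
    exact le_trans (Finset.card_filter_le _ _) (by simp)
  -- partition of rows according to minimal degree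
  have hsplit : (Finset.univ.filter (fun i : Fin m => a i = α)).card
      + (Finset.univ.filter (fun i : Fin m => α < a i)).card = m := by
    have h1 := Finset.card_filter_add_card_filter_not
      (s := (Finset.univ : Finset (Fin m))) (p := fun i => a i = α)
    have h2 : Finset.univ.filter (fun i : Fin m => ¬ a i = α)
        = Finset.univ.filter (fun i : Fin m => α < a i) := by
      refine Finset.filter_congr fun i _ => ?_
      have := hα₂ i
      constructor <;> intro <;> omega
    rw [h2] at h1
    simpa using h1
  -- each row's card bound
  have hcard_a : ∀ (p : Fin (n + 1) → Prop) (_ : DecidablePred p) (i : Fin m),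
      (Finset.univ.filter (fun j => p j ∧ M i j = true)).card ≤ a i := by
    intro p _ i
    rw [← hMa i]
    refine Finset.card_le_card fun j hj => ?_
    simp only [Finset.mem_filter, Finset.mem_univ, true_and] at hj ⊢
    exact hj.2
  -- Inequality A : partial sums of b' dominated by partial sums of z
  have hA : ∀ r, ∑ h ∈ Finset.Icc 1 r, bpad n b h ≤ ∑ h ∈ Finset.Icc 1 r, zconj m a h := by
    intro r
    rw [← sum_bpad n r b, sum_zconj]
    rw [double_count M b hMb]
    refine Finset.sum_le_sum fun i _ => le_min (hcard_a _ inferInstance i) ?_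
    refine le_trans (Finset.card_le_card fun j hj => ?_) (card_filter_val n r)
    simp only [Finset.mem_filter, Finset.mem_univ, true_and] at hj ⊢
    exact hj.1
  -- Inequality B : Gale–Ryser type inequality including column 0
  have hB2 : ∀ r, α ≤ r →
      b 0 + ∑ h ∈ Finset.Icc 1 r, bpad n b h
        ≤ (∑ h ∈ Finset.Icc 1 r, zconj m a h)
          + (Finset.univ.filter (fun i : Fin m => α < a i)).card := by
    intro r hr
    have hins : Finset.univ.filter (fun j : Fin (n + 1) => j.val ≤ r)
        = insert 0 (Finset.univ.filter (fun j : Fin (n + 1) => 1 ≤ j.val ∧ j.val ≤ r)) := by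
      ext j
      simp only [Finset.mem_filter, Finset.mem_univ, true_and, Finset.mem_insert,
        Fin.ext_iff, Fin.val_zero]
      omega
    have h0 : b 0 + ∑ h ∈ Finset.Icc 1 r, bpad n b h
        = ∑ j ∈ Finset.univ.filter (fun j : Fin (n + 1) => j.val ≤ r), b j := by
      rw [hins, Finset.sum_insert (by simp), sum_bpad]
    rw [h0, double_count M b hMb]
    have hcard_r : (Finset.univ.filter (fun j : Fin (n + 1) => j.val ≤ r)).card ≤ r + 1 := by
      rw [hins]
      exact le_trans (Finset.card_insert_le _ _)
        (by have := card_filter_val n r; omega)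
    have step1 : ∑ i, (Finset.univ.filter
        (fun j : Fin (n + 1) => j.val ≤ r ∧ M i j = true)).card
        ≤ ∑ i, min (a i) (r + 1) := by
      refine Finset.sum_le_sum fun i _ => le_min (hcard_a _ inferInstance i) ?_
      refine le_trans (Finset.card_le_card fun j hj => ?_) hcard_r
      simp only [Finset.mem_filter, Finset.mem_univ, true_and] at hj ⊢
      exact hj.1
    have step2 : ∑ i, min (a i) (r + 1)
        = (∑ h ∈ Finset.Icc 1 r, zconj m a h) + zconj m a (r + 1) := by
      rw [← sum_zconj, Finset.sum_Icc_succ_top (by omega) (zconj m a)]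
    have step3 : zconj m a (r + 1)
        ≤ (Finset.univ.filter (fun i : Fin m => α < a i)).card := by
      refine Finset.card_le_card fun i hi => ?_
      simp only [Finset.mem_filter, Finset.mem_univ, true_and] at hi ⊢
      omega
    calc ∑ i, (Finset.univ.filter
          (fun j : Fin (n + 1) => j.val ≤ r ∧ M i j = true)).card
        ≤ ∑ i, min (a i) (r + 1) := step1
      _ = (∑ h ∈ Finset.Icc 1 r, zconj m a h) + zconj m a (r + 1) := step2
      _ ≤ _ := by exact Nat.add_le_add_left step3 _
  -- integer versions
  have hAz : ∀ r, (0 : ℤ) ≤ ∑ h ∈ Finset.Icc 1 r, ((zconj m a h : ℤ) - (bpad n b h : ℤ)) := by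
    intro r
    rw [Finset.sum_sub_distrib, ← Nat.cast_sum, ← Nat.cast_sum]
    have := hA r
    omega
  have hBz : ∀ r, α ≤ r →
      (b 0 : ℤ) - ((Finset.univ.filter (fun i : Fin m => α < a i)).card : ℤ)
        ≤ ∑ h ∈ Finset.Icc 1 r, ((zconj m a h : ℤ) - (bpad n b h : ℤ)) := by
    intro r hr
    rw [Finset.sum_sub_distrib, ← Nat.cast_sum, ← Nat.cast_sum]
    have := hB2 r hr
    omega
  -- combine the head terms
  have hP : (∑ h ∈ Finset.Icc 1 (α - 1), ((zconj m a h : ℤ) - (bpad n b h : ℤ)))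
      + ((zconj m a α : ℤ) - (bpad n b α : ℤ))
      = ∑ h ∈ Finset.Icc 1 α, ((zconj m a h : ℤ) - (bpad n b h : ℤ)) := by
    have h := Finset.sum_Icc_succ_top (a := 1) (b := α - 1) (by omega)
      (fun h => ((zconj m a h : ℤ) - (bpad n b h : ℤ)))
    rw [show α - 1 + 1 = α by omega] at h
    exact h.symm
  -- find r realizing the min
  have hex : ∃ r, α ≤ r ∧
      min (sInf {s : ℤ | ∃ r ∈ Finset.Icc (α + 1) (n + 1),
          s = ∑ h ∈ Finset.Icc (α + 1) r, ((zconj m a h : ℤ) - (bpad n b h : ℤ))}) 0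
        = ∑ h ∈ Finset.Icc (α + 1) r, ((zconj m a h : ℤ) - (bpad n b h : ℤ)) := by
    set T : Set ℤ := {s : ℤ | ∃ r ∈ Finset.Icc (α + 1) (n + 1),
        s = ∑ h ∈ Finset.Icc (α + 1) r, ((zconj m a h : ℤ) - (bpad n b h : ℤ))} with hT
    by_cases hcase : α + 1 ≤ n + 1
    · have hne : T.Nonempty := by
        refine ⟨∑ h ∈ Finset.Icc (α + 1) (n + 1),
          ((zconj m a h : ℤ) - (bpad n b h : ℤ)), ⟨n + 1, ?_, rfl⟩⟩
        simp only [Finset.mem_Icc]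
        omega
      have hfin : T.Finite := by
        have himg : T = (fun r => ∑ h ∈ Finset.Icc (α + 1) r,
            ((zconj m a h : ℤ) - (bpad n b h : ℤ))) '' ↑(Finset.Icc (α + 1) (n + 1)) := by
          ext s
          simp only [hT, Set.mem_setOf_eq, Set.mem_image, Finset.coe_Icc, Set.mem_Icc,
            Finset.mem_Icc]
          constructor
          · rintro ⟨r, hr, rfl⟩; exact ⟨r, hr, rfl⟩
          · rintro ⟨r, hr, rfl⟩; exact ⟨r, hr, rfl⟩
        rw [himg]
        exact Set.Finite.image _ (Finset.finite_toSet _)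
      obtain ⟨r, hrmem, hrval⟩ := hne.csInf_mem hfin
      rcases le_or_gt (sInf T) 0 with h0 | h0
      · refine ⟨r, ?_, ?_⟩
        · simp only [Finset.mem_Icc] at hrmem; omega
        · rw [min_eq_left h0]; exact hrval
      · refine ⟨α, le_rfl, ?_⟩
        rw [min_eq_right h0.le, Finset.Icc_eq_empty (by omega), Finset.sum_empty]
    · have hem : T = ∅ := by
        ext s
        simp only [hT, Set.mem_setOf_eq, Set.mem_empty_iff_false, iff_false]
        rintro ⟨r, hrmem, -⟩
        simp only [Finset.mem_Icc] at hrmem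
        omega
      refine ⟨α, le_rfl, ?_⟩
      rw [hem, Int.csInf_empty, min_self, Finset.Icc_eq_empty (by omega), Finset.sum_empty]
  obtain ⟨r, hrα, hmin⟩ := hex
  have hunion : (∑ h ∈ Finset.Icc 1 α, ((zconj m a h : ℤ) - (bpad n b h : ℤ)))
      + ∑ h ∈ Finset.Icc (α + 1) r, ((zconj m a h : ℤ) - (bpad n b h : ℤ))
      = ∑ h ∈ Finset.Icc 1 r, ((zconj m a h : ℤ) - (bpad n b h : ℤ)) := by
    rw [← Finset.sum_union (by
      simp only [Finset.disjoint_left, Finset.mem_Icc]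
      intro x hx hx2
      omega)]
    congr 1
    ext x
    simp only [Finset.mem_union, Finset.mem_Icc]
    omega
  refine max_le (le_min ?_ ?_) (le_min ?_ ?_)
  · -- b0 - m+ ≤ m1
    omega
  · rw [hP, hmin, hunion]
    exact hBz r hrα
  · positivity
  · rw [hP, hmin, hunion]
    exact hAz r
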